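/- For any α, β ∈ ℤ/bℤ there exist i₁, i₂ ∈ ℤ/bℤ such that setting u_{−1} = α, u₀ = β, u₁ = i₁u₀ + u_{−1}, u₂ = i₂u₁ + u₀, one has u₂ = 0 in ℤ/bℤ. -/
import Mathlib

/-- For `x` coprime to `n`, one can add a multiple of `n` to `x` to make it
coprime to `m` (when `m ≠ 0`). -/
private lemma aux_coprime_add_mul (m n x : ℕ) (hm : m ≠ 0) (hx : x.Coprime n) :
    ∃ k : ℕ, (x + k * n).Coprime m := by
  let ps := m.primeFactors.filter (fun p ↦ ¬p ∣ x)
  use ps.prod id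
  apply Nat.coprime_of_dvd
  intro p pp hp hpn
  by_cases hpx : p ∣ x
  · have h := Nat.dvd_sub hp hpx
    rw [add_comm, Nat.add_sub_cancel] at h
    rcases pp.dvd_mul.mp h with h | h
    · have ⟨q, hq, hq'⟩ := (pp.prime.dvd_finset_prod_iff id).mp h
      rw [Finset.mem_filter, Nat.mem_primeFactors,
        ← (Nat.prime_dvd_prime_iff_eq pp hq.1.1).mp hq'] at hq
      exact hq.2 hpx
    · exact Nat.Prime.not_coprime_iff_dvd.mpr ⟨p, pp, hpx, h⟩ hx
  · have pps : p ∈ ps := Finset.mem_filter.mpr ⟨Nat.mem_primeFactors.mpr ⟨pp, hpn, hm⟩, hpx⟩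
    have h := Nat.dvd_sub hp ((Finset.dvd_prod_of_mem id pps).mul_right n)
    rw [Nat.add_sub_cancel] at h
    contradiction

/-- For any α, β ∈ ℤ/bℤ there exist i₁, i₂ ∈ ℤ/bℤ with
u₋₁ = α, u₀ = β, u₁ = i₁u₀ + u₋₁, u₂ = i₂u₁ + u₀ and u₂ = 0. -/
theorem zmod_two_step_recurrence_kill
    (b : ℕ) (hb : 1 ≤ b) (α β : ZMod b) :
    ∃ i₁ i₂ : ZMod b, i₂ * (i₁ * β + α) + β = 0 := by
  have hb0 : b ≠ 0 := by omega
  obtain ⟨d, hd, u, hu, rfl⟩ := ZMod.eq_unit_mul_divisor β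
  obtain ⟨e, he, w, hw, rfl⟩ := ZMod.eq_unit_mul_divisor α
  obtain ⟨U, rfl⟩ := hu
  obtain ⟨W, rfl⟩ := hw
  have hd0 : d ≠ 0 := fun h => hb0 (by simpa [h] using hd)
  set g := Nat.gcd d e with hg
  have hgpos : 0 < g := Nat.gcd_pos_of_pos_left _ (Nat.pos_of_ne_zero hd0)
  set d₀ := d / g with hd₀
  set e₀ := e / g with he₀
  have hco : Nat.Coprime d₀ e₀ := Nat.coprime_div_gcd_div_gcd hgpos
  obtain ⟨k, hk⟩ := aux_coprime_add_mul b d₀ e₀ hb0 hco.symm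
  have hunit : IsUnit ((e₀ + k * d₀ : ℕ) : ZMod b) := (ZMod.isUnit_iff_coprime _ _).mpr hk
  obtain ⟨V, hV⟩ := hunit
  have hV' : (V : ZMod b) = (e₀ : ZMod b) + (k : ZMod b) * (d₀ : ZMod b) := by
    rw [hV]; push_cast; ring
  have hdg : (d : ZMod b) = (g : ZMod b) * (d₀ : ZMod b) := by
    rw [← Nat.cast_mul, Nat.mul_div_cancel' (Nat.gcd_dvd_left d e)]
  have heg : (e : ZMod b) = (g : ZMod b) * (e₀ : ZMod b) := by
    rw [← Nat.cast_mul, Nat.mul_div_cancel' (Nat.gcd_dvd_right d e)]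
  have hA : (↑U⁻¹ * ↑U : ZMod b) = 1 := U.inv_mul
  have hB : (↑W⁻¹ * ↑W : ZMod b) = 1 := W.inv_mul
  have hC : (↑V⁻¹ * ↑V : ZMod b) = 1 := V.inv_mul
  refine ⟨(k : ZMod b) * ↑W * ↑U⁻¹, -(d₀ : ZMod b) * ↑U * ↑W⁻¹ * ↑V⁻¹, ?_⟩
  rw [hdg, heg]
  have key : ((k : ZMod b) * ↑W * ↑U⁻¹) * (↑U * ((g : ZMod b) * (d₀ : ZMod b)))
      + ↑W * ((g : ZMod b) * (e₀ : ZMod b)) = ↑W * (g : ZMod b) * ↑V := by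
    linear_combination ((k : ZMod b) * ↑W * (g : ZMod b) * (d₀ : ZMod b)) * hA
      - (↑W * (g : ZMod b)) * hV'
  rw [key]
  linear_combination (-(d₀ : ZMod b) * ↑U * (g : ZMod b) * (↑V⁻¹ * ↑V)) * hB
    - ((d₀ : ZMod b) * ↑U * (g : ZMod b)) * hC
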